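/- For the multicalibration boosting dynamics with relaxed rescaling weights w_t ∈ (0,1], the difference of successive squared residual norms satisfies, for every t ≥ 0, the exact identity: ‖y − f_t‖₂² − ‖y − f_{t+1}‖₂² = w_t η (2 − w_t η) ‖A(f_t)(y − f_t)‖₂² + (1 − w_t)² ‖f_t‖₂² − 2(1 − w_t) ⟨f_t, y − f_{t+1}⟩. -/

import Mathlib

open Matrix
open scoped BigOperators

/-- The action of a real matrix on vectors of `EuclideanSpace`. -/
noncomputable def mulVecE {m n : Type*} [Fintype m] [Fintype n] [DecidableEq n]
    (A : Matrix m n ℝ) (v : EuclideanSpace ℝ n) : EuclideanSpace ℝ m :=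
  Matrix.toEuclideanLin A v

lemma mulVecE_key {n : ℕ} (P : Matrix (Fin n) (Fin n) ℝ) (hs : Pᵀ = P) (hp : P * P = P)
    (r : EuclideanSpace ℝ (Fin n)) :
    (inner ℝ r (mulVecE P r) : ℝ) = ‖mulVecE P r‖ ^ 2 := by
  have hct : P.conjTranspose = P := by
    ext i j; simpa [Matrix.conjTranspose_apply] using (congrFun (congrFun hs j) i).symm
  have hadj : LinearMap.adjoint (Matrix.toEuclideanLin P) = Matrix.toEuclideanLin P := by
    rw [← Matrix.toEuclideanLin_conjTranspose_eq_adjoint, hct]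
  have hcomp : Matrix.toEuclideanLin P (Matrix.toEuclideanLin P r) =
      Matrix.toEuclideanLin P r := by
    rw [Matrix.toEuclideanLin_apply, Matrix.toEuclideanLin_apply]
    simp [Matrix.mulVec_mulVec, hp]
  rw [← real_inner_self_eq_norm_sq]
  unfold mulVecE
  calc (inner ℝ r (Matrix.toEuclideanLin P r) : ℝ)
      = inner ℝ r (Matrix.toEuclideanLin P (Matrix.toEuclideanLin P r)) := by rw [hcomp]
    _ = inner ℝ r (LinearMap.adjoint (Matrix.toEuclideanLin P) (Matrix.toEuclideanLin P r)) := by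
        rw [hadj]
    _ = inner ℝ (Matrix.toEuclideanLin P r) (Matrix.toEuclideanLin P r) :=
        LinearMap.adjoint_inner_right _ _ _

/-- **Exact identity for successive squared residual norms under relaxed rescaling.**
For the dynamics `f_{t+1} = w_t (f_t + η A(f_t)(y - f_t))` with weights `w_t ∈ (0,1]` and
orthogonal projections `A(f)`, for every `t ≥ 0`:
`‖y-f_t‖₂² - ‖y-f_{t+1}‖₂² = w_t η (2 - w_t η) ‖A(f_t)(y-f_t)‖₂² + (1-w_t)² ‖f_t‖₂²
  - 2(1-w_t) ⟨f_t, y - f_{t+1}⟩`. -/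
theorem multicalibration_boosting_relaxed_residual_identity
    {n : ℕ} (y : EuclideanSpace ℝ (Fin n)) (η : ℝ) (hη0 : 0 < η) (hη1 : η ≤ 1)
    (w : ℕ → ℝ) (hw : ∀ t, w t ∈ Set.Ioc (0 : ℝ) 1)
    (A : EuclideanSpace ℝ (Fin n) → Matrix (Fin n) (Fin n) ℝ)
    (hAsymm : ∀ f, (A f)ᵀ = A f) (hAproj : ∀ f, A f * A f = A f)
    (f : ℕ → EuclideanSpace ℝ (Fin n))
    (hf : ∀ t, f (t + 1) = w t • (f t + η • mulVecE (A (f t)) (y - f t))) :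
    ∀ t : ℕ,
      ‖y - f t‖ ^ 2 - ‖y - f (t + 1)‖ ^ 2 =
        w t * η * (2 - w t * η) * ‖mulVecE (A (f t)) (y - f t)‖ ^ 2 +
          (1 - w t) ^ 2 * ‖f t‖ ^ 2 -
          2 * (1 - w t) * (inner ℝ (f t) (y - f (t + 1)) : ℝ) := by
  intro t
  set a : EuclideanSpace ℝ (Fin n) := y - f t with ha
  set b : EuclideanSpace ℝ (Fin n) := f t with hb
  set u : EuclideanSpace ℝ (Fin n) := mulVecE (A (f t)) (y - f t) with hu
  have key : (inner ℝ a u : ℝ) = ‖u‖ ^ 2 := mulVecE_key _ (hAsymm _) (hAproj _) _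
  set c1 : ℝ := 1 - w t with hc1
  set c2 : ℝ := w t * η with hc2
  have hv : y - f (t + 1) = a + c1 • b - c2 • u := by
    rw [hf t, smul_add, smul_smul, ← hu, ← hc2]
    rw [ha, hb, hc1]
    module
  rw [hv]
  rw [← real_inner_self_eq_norm_sq a, ← real_inner_self_eq_norm_sq b,
    ← real_inner_self_eq_norm_sq u, ← real_inner_self_eq_norm_sq]
  simp only [inner_add_left, inner_add_right, inner_sub_left, inner_sub_right,
    real_inner_smul_left, real_inner_smul_right]
  have key' : (inner ℝ a u : ℝ) = inner ℝ u u := key.trans (real_inner_self_eq_norm_sq u).symm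
  have h1 : (inner ℝ b a : ℝ) = inner ℝ a b := (real_inner_comm b a).symm
  have h2 : (inner ℝ u a : ℝ) = inner ℝ a u := (real_inner_comm u a).symm
  have h3 : (inner ℝ u b : ℝ) = inner ℝ b u := (real_inner_comm u b).symm
  linear_combination (1 - w t) * h1 + (w t * η) * h2 + ((1 - w t) * (w t * η)) * h3 +
    2 * (w t * η) * key'
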